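/- Let X be a nonempty compact metric space and μ a finite Borel measure on X with full support (μ(U) > 0 for every nonempty open U ⊆ X). Let u, w : X → ℝ be continuous with min u = 0, max u = l > 0 and min w = 0. For t ∈ [0,1] set h_t := min(t·l, u) + w and g(t) := ∫_X normalize(h_t) dμ, and let t₀ ∈ [0,1] be the unique minimizer of g on [0,1]. Then argmin(h_{t₀}) = argmin(w) ∪ argmin(u+w), and for every t ∈ [0,1], argmin(h_t) ⊆ argmin(w) ∪ argmin(u+w). -/
import Mathlib


open MeasureTheory Set

/-- The (attained) minimum of `f` on a nonempty compact space. -/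
noncomputable def minF {X : Type*} (f : X → ℝ) : ℝ := sInf (Set.range f)

/-- The (attained) maximum of `f` on a nonempty compact space. -/
noncomputable def maxF {X : Type*} (f : X → ℝ) : ℝ := sSup (Set.range f)

/-- The oscillation `max f - min f`. -/
noncomputable def oscF {X : Type*} (f : X → ℝ) : ℝ := maxF f - minF f

/-- `normalize f = f - min f`. -/
noncomputable def normF {X : Type*} (f : X → ℝ) : X → ℝ := fun x => f x - minF f

/-- The minimizer set of `f`. -/
def argminF {X : Type*} (f : X → ℝ) : Set X := {x | f x = minF f}

/-- The maximizer set of `f`. -/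
def argmaxF {X : Type*} (f : X → ℝ) : Set X := {x | f x = maxF f}

section Aux

variable {X : Type*} [TopologicalSpace X] [CompactSpace X] [Nonempty X]

theorem minF_le' {f : X → ℝ} (hf : Continuous f) (x : X) : minF f ≤ f x :=
  csInf_le (isCompact_range hf).bddBelow ⟨x, rfl⟩

theorem le_minF' {f : X → ℝ} {a : ℝ} (h : ∀ x, a ≤ f x) : a ≤ minF f :=
  le_csInf (Set.range_nonempty f) (by rintro _ ⟨x, rfl⟩; exact h x)

theorem le_maxF' {f : X → ℝ} (hf : Continuous f) (x : X) : f x ≤ maxF f :=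
  le_csSup (isCompact_range hf).bddAbove ⟨x, rfl⟩

theorem exists_minF' {f : X → ℝ} (hf : Continuous f) : ∃ x, f x = minF f := by
  obtain ⟨x, -, hx⟩ := isCompact_univ.exists_isMinOn univ_nonempty hf.continuousOn
  exact ⟨x, le_antisymm (le_minF' fun y => (isMinOn_iff.mp hx) y (mem_univ y)) (minF_le' hf x)⟩

theorem exists_maxF' {f : X → ℝ} (hf : Continuous f) : ∃ x, f x = maxF f := by
  obtain ⟨x, -, hx⟩ := isCompact_univ.exists_isMaxOn univ_nonempty hf.continuousOn
  exact ⟨x, le_antisymm (le_maxF' hf x)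
    (csSup_le (Set.range_nonempty f)
      (by rintro _ ⟨y, rfl⟩; exact (isMaxOn_iff.mp hx) y (mem_univ y)))⟩

end Aux

theorem cont_integrable' {X : Type*} [MetricSpace X] [CompactSpace X]
    [MeasurableSpace X] [BorelSpace X] (μ : Measure X) [IsFiniteMeasure μ]
    {f : X → ℝ} (hf : Continuous f) : Integrable f μ := by
  have h := hf.continuousOn (s := Set.univ)
  exact integrableOn_univ.mp (h.integrableOn_compact isCompact_univ)

theorem integral_pos_of_pos_on {X : Type*} [MetricSpace X] [CompactSpace X] [Nonempty X]
    [MeasurableSpace X] [BorelSpace X] (μ : Measure X) [IsFiniteMeasure μ]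
    (hfull : ∀ U : Set X, IsOpen U → U.Nonempty → 0 < μ U)
    {f : X → ℝ} (hf : Continuous f) (h0 : ∀ x, 0 ≤ f x)
    {V : Set X} (hV : IsOpen V) (hVne : V.Nonempty) (hfV : ∀ x ∈ V, 0 < f x) :
    0 < ∫ x, f x ∂μ := by
  rw [integral_pos_iff_support_of_nonneg h0 (cont_integrable' μ hf)]
  exact lt_of_lt_of_le (hfull V hV hVne)
    (measure_mono fun x hx => (hfV x hx).ne')

theorem stmt_14 {X : Type*} [MetricSpace X] [CompactSpace X] [Nonempty X]
    [MeasurableSpace X] [BorelSpace X]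
    (μ : Measure X) [IsFiniteMeasure μ]
    (hfull : ∀ U : Set X, IsOpen U → U.Nonempty → 0 < μ U)
    (u w : X → ℝ) (hu : Continuous u) (hw : Continuous w)
    (l : ℝ) (hl : 0 < l) (humin : minF u = 0) (humax : maxF u = l)
    (hwmin : minF w = 0)
    (t₀ : ℝ) (ht₀ : t₀ ∈ Set.Icc (0:ℝ) 1)
    (ht₀min : ∀ t ∈ Set.Icc (0:ℝ) 1,
      (∫ x, normF (fun x => min (t₀ * l) (u x) + w x) x ∂μ) ≤
        ∫ x, normF (fun x => min (t * l) (u x) + w x) x ∂μ) :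
    argminF (fun x => min (t₀ * l) (u x) + w x) =
      argminF w ∪ argminF (fun x => u x + w x) ∧
    ∀ t ∈ Set.Icc (0:ℝ) 1,
      argminF (fun x => min (t * l) (u x) + w x) ⊆
        argminF w ∪ argminF (fun x => u x + w x) := by
  have hw0 : ∀ x, 0 ≤ w x := fun x => hwmin ▸ minF_le' hw x
  have hu0 : ∀ x, 0 ≤ u x := fun x => humin ▸ minF_le' hu x
  have hul : ∀ x, u x ≤ l := fun x => humax ▸ le_maxF' hu x
  have hhc : ∀ t : ℝ, Continuous fun x => min (t * l) (u x) + w x :=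
    fun t => (continuous_const.min hu).add hw
  have huw : Continuous fun x => u x + w x := hu.add hw
  obtain ⟨a, ha⟩ := exists_minF' hw
  have ha0 : w a = 0 := ha.trans hwmin
  obtain ⟨e, he⟩ := exists_minF' hu
  have he0 : u e = 0 := he.trans humin
  obtain ⟨z, hz⟩ := exists_maxF' hu
  have hzl : u z = l := hz.trans humax
  set c := minF (fun x => u x + w x) with hcdef
  obtain ⟨b, hb⟩ := exists_minF' huw
  have hc0 : 0 ≤ c := le_minF' fun x => add_nonneg (hu0 x) (hw0 x)
  have hcl : c ≤ l := by
    have h1 : c ≤ u a + w a := minF_le' huw a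
    rw [ha0, add_zero] at h1
    exact h1.trans (hul a)
  -- the minimum of h_t equals min (t*l) c
  have m_eq : ∀ t : ℝ, minF (fun x => min (t * l) (u x) + w x) = min (t * l) c := by
    intro t
    apply le_antisymm
    · apply le_min
      · calc minF (fun x => min (t * l) (u x) + w x) ≤ min (t * l) (u a) + w a :=
              minF_le' (hhc t) a
          _ ≤ t * l := by rw [ha0, add_zero]; exact min_le_left _ _
      · calc minF (fun x => min (t * l) (u x) + w x) ≤ min (t * l) (u b) + w b :=
              minF_le' (hhc t) b
          _ ≤ u b + w b := by have := min_le_right (t * l) (u b); linarith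
          _ = c := hb
    · apply le_minF'
      intro x
      rcases le_total (t * l) (u x) with h | h
      · rw [min_eq_left h]
        have h1 := hw0 x
        have h2 := min_le_left (t * l) c
        linarith
      · rw [min_eq_right h]
        have h1 : c ≤ u x + w x := minF_le' huw x
        have h2 := min_le_right (t * l) c
        linarith
  -- the subset property for every t
  have sub : ∀ t : ℝ, argminF (fun x => min (t * l) (u x) + w x) ⊆
      argminF w ∪ argminF (fun x => u x + w x) := by
    intro t x hx
    simp only [argminF, mem_setOf_eq] at hx
    have hle : ∀ y, min (t * l) (u x) + w x ≤ min (t * l) (u y) + w y := by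
      intro y
      have h1 : minF (fun x => min (t * l) (u x) + w x) ≤ min (t * l) (u y) + w y :=
        minF_le' (hhc t) y
      linarith [hx]
    rcases le_total (t * l) (u x) with h | h
    · left
      have hx0 : ∀ y, w x ≤ w y := by
        intro y
        have h1 := hle y
        rw [min_eq_left h] at h1
        have h2 := min_le_left (t * l) (u y)
        linarith
      exact le_antisymm (le_minF' hx0) (minF_le' hw x)
    · right
      have hx0 : ∀ y, u x + w x ≤ u y + w y := by
        intro y
        have h1 := hle y
        rw [min_eq_right h] at h1
        have h2 := min_le_right (t * l) (u y)
        linarith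
      exact le_antisymm (le_minF' hx0) (minF_le' huw x)
  -- the key identity t₀ * l = c
  simp only [normF] at ht₀min
  have key : t₀ * l = c := by
    by_contra hne
    set s : ℝ := c / l with hsdef
    have hsl : s * l = c := div_mul_cancel₀ c hl.ne'
    have hs : s ∈ Set.Icc (0:ℝ) 1 := ⟨div_nonneg hc0 hl.le, (div_le_one hl).mpr hcl⟩
    have hGle := ht₀min s hs
    have hms : minF (fun x => min c (u x) + w x) = c := by
      have h1 := m_eq s
      simp only [hsl] at h1
      rw [min_self] at h1
      exact h1
    have hmt : minF (fun x => min (t₀ * l) (u x) + w x) = min (t₀ * l) c := m_eq t₀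
    simp only [hsl, hms, hmt] at hGle
    have hiA : Integrable (fun x => min (t₀ * l) (u x) + w x - min (t₀ * l) c) μ :=
      cont_integrable' μ (((continuous_const.min hu).add hw).sub continuous_const)
    have hiB : Integrable (fun x => min c (u x) + w x - c) μ :=
      cont_integrable' μ (((continuous_const.min hu).add hw).sub continuous_const)
    have h0lt : 0 < ∫ x, ((min (t₀ * l) (u x) + w x - min (t₀ * l) c) -
        (min c (u x) + w x - c)) ∂μ := by
      rcases lt_or_gt_of_ne hne with hlt | hgt
      · -- t₀ * l < c
        simp only [min_eq_left hlt.le]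
        refine integral_pos_of_pos_on μ hfull (V := {x | u x < c}) ?_ ?_
          (isOpen_lt hu continuous_const) ⟨e, ?_⟩ ?_
        · fun_prop
        · intro x
          rcases le_total (u x) (t₀ * l) with h | h
          · rw [min_eq_right h, min_eq_right (h.trans hlt.le)]
            linarith
          · rw [min_eq_left h]
            have := min_le_left c (u x)
            linarith
        · show u e < c
          have h1 : 0 ≤ t₀ * l := mul_nonneg ht₀.1 hl.le
          rw [he0]; linarith
        · intro x hx
          have hx' : u x < c := hx
          rw [min_eq_right hx'.le]
          rcases le_total (u x) (t₀ * l) with h | h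
          · rw [min_eq_right h]; linarith
          · rw [min_eq_left h]; linarith
      · -- c < t₀ * l
        simp only [min_eq_right hgt.le]
        refine integral_pos_of_pos_on μ hfull (V := {x | c < u x}) ?_ ?_
          (isOpen_lt continuous_const hu) ⟨z, ?_⟩ ?_
        · fun_prop
        · intro x
          have h1 : min c (u x) ≤ min (t₀ * l) (u x) := min_le_min hgt.le le_rfl
          linarith
        · show c < u z
          have h1 : t₀ * l ≤ l := by nlinarith [ht₀.2, hl.le]
          rw [hzl]; linarith
        · intro x hx
          have hx' : c < u x := hx
          have h1 : c < min (t₀ * l) (u x) := lt_min hgt hx'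
          rw [min_eq_left hx'.le]
          linarith
    rw [integral_sub hiA hiB] at h0lt
    linarith
  -- conclude
  have hm0 : minF (fun x => min (t₀ * l) (u x) + w x) = c := by
    rw [m_eq t₀, key, min_self]
  refine ⟨subset_antisymm (sub t₀) ?_, fun t _ => sub t⟩
  intro x hx
  show min (t₀ * l) (u x) + w x = minF (fun x => min (t₀ * l) (u x) + w x)
  rw [hm0]
  have h2 : c ≤ min (t₀ * l) (u x) + w x := hm0 ▸ minF_le' (hhc t₀) x
  rcases hx with hx | hx
  · have hwx : w x = 0 := by
      have : w x = minF w := hx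
      rw [this, hwmin]
    have h1 : min (t₀ * l) (u x) + w x ≤ c := by
      rw [hwx, add_zero]
      calc min (t₀ * l) (u x) ≤ t₀ * l := min_le_left _ _
        _ = c := key
    exact le_antisymm h1 h2
  · have huwx : u x + w x = c := hx
    have h1 : min (t₀ * l) (u x) + w x ≤ c := by
      have := min_le_right (t₀ * l) (u x)
      linarith
    exact le_antisymm h1 h2
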